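/- Let k be a field and let f ∈ k[x,y,z]. If f ∈ (y,z)^{ν₁} ∩ (x,z)^{ν₂} ∩ (x,y)^{ν₃} for nonnegative integers ν₁, ν₂, ν₃, then the monomial x^{ν₁} y^{ν₂} z^{ν₃} divides σ(f) = f(yz, xz, xy). -/

import Mathlib

open MvPolynomial

lemma primeX {k : Type*} [Field k] (i : Fin 3) : Prime (X i : MvPolynomial (Fin 3) k) := by
  have h0 : Prime (X 0 : MvPolynomial (Fin 3) k) := by
    rw [((MulEquiv.prime_iff (MvPolynomial.finSuccEquiv k 2).toMulEquiv).symm :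
      Prime (X 0 : MvPolynomial (Fin 3) k) ↔ _)]
    simpa [finSuccEquiv_X_zero] using
      (Polynomial.prime_X : Prime (Polynomial.X : Polynomial (MvPolynomial (Fin 2) k)))
  have := ((MulEquiv.prime_iff
    (renameEquiv k (Equiv.swap (0 : Fin 3) i)).toMulEquiv).symm :
      Prime (X 0 : MvPolynomial (Fin 3) k) ↔ _).mp h0
  simpa [Equiv.swap_apply_left] using this

lemma key_dvd {k : Type*} [Field k] (f : MvPolynomial (Fin 3) k) {ν : ℕ}
    (i j m : Fin 3) (v : Fin 3 → MvPolynomial (Fin 3) k)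
    (h : f ∈ (Ideal.span {(X i : MvPolynomial (Fin 3) k), X j}) ^ ν)
    (hi : (X m : MvPolynomial (Fin 3) k) ∣ v i) (hj : (X m : MvPolynomial (Fin 3) k) ∣ v j) :
    (X m : MvPolynomial (Fin 3) k) ^ ν ∣ aeval v f := by
  have hmem : aeval v f ∈ (Ideal.map (aeval v : MvPolynomial (Fin 3) k →ₐ[k] _)
      (Ideal.span {(X i : MvPolynomial (Fin 3) k), X j})) ^ ν := by
    rw [← Ideal.map_pow]
    exact Ideal.mem_map_of_mem _ h
  have hle : Ideal.map (aeval v : MvPolynomial (Fin 3) k →ₐ[k] _)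
      (Ideal.span {(X i : MvPolynomial (Fin 3) k), X j}) ≤
        Ideal.span {(X m : MvPolynomial (Fin 3) k)} := by
    rw [Ideal.map_span, Ideal.span_le]
    rintro p ⟨q, hq, rfl⟩
    rcases hq with rfl | hq
    · simpa [Ideal.mem_span_singleton] using hi
    · rw [Set.mem_singleton_iff] at hq; subst hq
      simpa [Ideal.mem_span_singleton] using hj
  have := Ideal.pow_right_mono hle ν hmem
  rw [Ideal.span_singleton_pow, Ideal.mem_span_singleton] at this
  exact this

/-- Let `k` be a field and `f ∈ k[x,y,z]`.  If
`f ∈ (y,z)^{ν₁} ∩ (x,z)^{ν₂} ∩ (x,y)^{ν₃}`, then the monomial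
`x^{ν₁} y^{ν₂} z^{ν₃}` divides `σ(f) = f(yz, xz, xy)`, where `σ` is the
quadratic substitution `x ↦ yz, y ↦ xz, z ↦ xy`. -/
theorem stmt2 {k : Type*} [Field k] (f : MvPolynomial (Fin 3) k)
    (ν₁ ν₂ ν₃ : ℕ)
    (h₁ : f ∈ (Ideal.span {(X 1 : MvPolynomial (Fin 3) k), X 2}) ^ ν₁)
    (h₂ : f ∈ (Ideal.span {(X 0 : MvPolynomial (Fin 3) k), X 2}) ^ ν₂)
    (h₃ : f ∈ (Ideal.span {(X 0 : MvPolynomial (Fin 3) k), X 1}) ^ ν₃) :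
    (X 0 : MvPolynomial (Fin 3) k) ^ ν₁ * X 1 ^ ν₂ * X 2 ^ ν₃ ∣
      aeval ![X 1 * X 2, X 0 * X 2, X 0 * X 1] f := by
  set v : Fin 3 → MvPolynomial (Fin 3) k := ![X 1 * X 2, X 0 * X 2, X 0 * X 1] with hv
  have d1 : (X 0 : MvPolynomial (Fin 3) k) ^ ν₁ ∣ aeval v f :=
    key_dvd f 1 2 0 v h₁ ⟨X 2, rfl⟩ ⟨X 1, rfl⟩
  have d2 : (X 1 : MvPolynomial (Fin 3) k) ^ ν₂ ∣ aeval v f :=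
    key_dvd f 0 2 1 v h₂ ⟨X 2, by simp [hv, mul_comm]⟩ ⟨X 0, by simp [hv, mul_comm]⟩
  have d3 : (X 2 : MvPolynomial (Fin 3) k) ^ ν₃ ∣ aeval v f :=
    key_dvd f 0 1 2 v h₃ ⟨X 1, by simp [hv, mul_comm]⟩ ⟨X 0, by simp [hv, mul_comm]⟩
  have hrel : ∀ i j : Fin 3, i ≠ j →
      IsRelPrime (X i : MvPolynomial (Fin 3) k) (X j) := by
    intro i j hij
    exact ((primeX i).irreducible.isRelPrime_iff_not_dvd).mpr (by simp [X_dvd_X, hij])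
  have r01 : IsRelPrime ((X 0 : MvPolynomial (Fin 3) k) ^ ν₁) (X 1 ^ ν₂) :=
    (hrel 0 1 (by decide)).pow
  have r2 : IsRelPrime ((X 0 : MvPolynomial (Fin 3) k) ^ ν₁ * X 1 ^ ν₂) (X 2 ^ ν₃) :=
    IsRelPrime.mul_left ((hrel 0 2 (by decide)).pow) ((hrel 1 2 (by decide)).pow)
  exact r2.mul_dvd (r01.mul_dvd d1 d2) d3
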